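/- arXiv:1305.4059 — 2 statements merged into one kernel-verified Lean document; each statement's English description precedes it below -/
import Mathlib

section
/- Let η : ñ₊ → ℂ be a Lie algebra homomorphism, let a = (a₁,…,a_m) ∈ ℂ^m have nonzero pairwise distinct entries, and let λ = (λ₁,…,λ_m) ∈ (h*)^m. Then there is an isomorphism of ĝ-modules Ind_{ñ₊}^{ĝ} S(η,λ,a) ≅ E(λ,a) ⊗ M(η), where the right-hand side carries the diagonal ĝ-action. -/
/- Common framework for formalizing statements from
   "Irreducible modules over affine Kac–Moody algebras which are locally finite
    over the positive part" (Guo–Zhao).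

   Conventions:
   * `g` is a finite-dimensional simple complex Lie algebra.
   * The loop algebra `g ⊗ ℂ[t,t⁻¹]` is modelled by the vector space `ℤ →₀ g`
     (`Finsupp.single p x` corresponds to `x ⊗ tᵖ`).
   * The affine algebra `ĝ = g ⊗ ℂ[t,t⁻¹] ⊕ ℂK` is any Lie algebra equipped with
     an `AffineAlg` structure (a linear equivalence with `(ℤ →₀ g) × ℂ` fixing the
     bracket on generators, where `(0,1)` is the central element `K`).
   * Similarly `t̃g = ĝ ⊕ ℂd` is any Lie algebra with an `AffineAlgD` structure on
     `(ℤ →₀ g) × ℂ × ℂ`, where `(0,1,0) = K` and `(0,0,1) = d`.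
   * The current algebra `g ⊗ ℂ[t]` is `Polynomial ℂ ⊗[ℂ] g`, and the positive part
     `ñ₊ = (g ⊗ tℂ[t]) ⊕ (n₊ ⊗ 1)` is any Lie algebra `nt` with an `NtAlg` structure:
     an injective Lie algebra morphism into the current algebra with range `ñ₊`.
   * Induced modules are specified by structures that pin them down uniquely up to
     isomorphism (`IndModule` via the PBW description `ℂ[d] ⊗ M`, and universal
     properties for induction from `ñ₊`).
-/

open scoped TensorProduct
open Polynomial

attribute [local instance 100] LieRing.ofAssociativeRing

noncomputable section

namespace AffinePaper

variable (g : Type) [LieRing g] [LieAlgebra ℂ g]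

/-- The current algebra `g ⊗ ℂ[t]` is a complex Lie algebra. -/
instance : LieAlgebra ℂ (Polynomial ℂ ⊗[ℂ] g) where
  lie_smul c x y := by
    rw [← algebraMap_smul (Polynomial ℂ) c y, ← algebraMap_smul (Polynomial ℂ) c ⁅x, y⁆]
    exact lie_smul (algebraMap ℂ (Polynomial ℂ) c) x y

/-- The weight space of `ad H` on `g` for a functional `α` on a subalgebra `H`. -/
def wtSpace (H : LieSubalgebra ℂ g) (α : Module.Dual ℂ H) : Submodule ℂ g where
  carrier := {x : g | ∀ h : H, ⁅(h : g), x⁆ = α h • x}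
  add_mem' := fun {a b} ha hb h => by rw [lie_add, ha h, hb h, smul_add]
  zero_mem' := fun h => by rw [lie_zero, smul_zero]
  smul_mem' := fun c x hx h => by rw [lie_smul, hx h]; exact smul_comm c (α h) x

/-- `α` is a root of `(g, H)`. -/
def IsRootOf (H : LieSubalgebra ℂ g) (α : Module.Dual ℂ H) : Prop :=
  α ≠ 0 ∧ wtSpace g H α ≠ ⊥

/-- A triangular decomposition `g = n₋ ⊕ h ⊕ n₊` of `g` relative to a Cartan
subalgebra `H`, given by a positive system `P` of roots. -/
structure TriangularData where
  H : LieSubalgebra ℂ g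
  nPos : LieSubalgebra ℂ g
  nNeg : LieSubalgebra ℂ g
  isCartan : H.IsCartanSubalgebra
  P : Set (Module.Dual ℂ H)
  pos_isRoot : ∀ α ∈ P, IsRootOf g H α
  pos_neg : ∀ α, IsRootOf g H α → (α ∈ P ↔ -α ∉ P)
  nPos_eq : nPos.toSubmodule = ⨆ α ∈ P, wtSpace g H α
  nNeg_eq : nNeg.toSubmodule = ⨆ α ∈ P, wtSpace g H (-α)
  triang : nNeg.toSubmodule ⊔ H.toSubmodule ⊔ nPos.toSubmodule = ⊤

variable {g}

/-- The simple roots of a positive system: the positive roots that are not sums of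
two positive roots. -/
def TriangularData.simpleRoots (D : TriangularData g) : Set (Module.Dual ℂ D.H) :=
  {α | α ∈ D.P ∧ ¬∃ β ∈ D.P, ∃ γ ∈ D.P, α = β + γ}

/-- `θ` is the highest root. -/
def TriangularData.IsHighestRoot (D : TriangularData g) (θ : Module.Dual ℂ D.H) : Prop :=
  θ ∈ D.P ∧ ∀ α ∈ D.P, ¬ IsRootOf g D.H (θ + α)

/-- `lam ∈ h*` is dominant integral: it takes nonnegative integer values on all
coroots (elements `hc = ⁅e, f⁆ ∈ [g_α, g_{-α}]` with `α hc = 2`, `α` positive). -/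
def IsDominantIntegral (D : TriangularData g) (lam : Module.Dual ℂ D.H) : Prop :=
  ∀ α ∈ D.P, ∀ (e f : g) (hc : D.H), e ∈ wtSpace g D.H α → f ∈ wtSpace g D.H (-α) →
    ⁅e, f⁆ = (hc : g) → α hc = 2 → ∃ n : ℕ, lam hc = (n : ℂ)

variable (g)

/-- The subspace `I(f) = n₊ ⊗ f ℂ[t] + (h ⊕ n₋) ⊗ t f ℂ[t]` of the current algebra. -/
def idealI (D : TriangularData g) (f : Polynomial ℂ) : Submodule ℂ (Polynomial ℂ ⊗[ℂ] g) :=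
  Submodule.span ℂ
    ({z | ∃ x ∈ D.nPos, ∃ p : Polynomial ℂ, z = (f * p) ⊗ₜ[ℂ] x} ∪
     {z | ∃ x : g, x ∈ D.H.toSubmodule ⊔ D.nNeg.toSubmodule ∧
        ∃ p : Polynomial ℂ, z = (X * f * p) ⊗ₜ[ℂ] x})

/-- The subspace `Σ_{α∈Δ₊∖Π} g_α ⊗ fℂ[t] + Σ_{α∈Π} g_α ⊗ tfℂ[t] +
Σ_{α∈Δ₊∖{θ}} g_{−α} ⊗ tfℂ[t] + g_{−θ} ⊗ t²fℂ[t] + h ⊗ tfℂ[t]` of the current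
algebra (`θ` the highest root); for `f = 1` this is the subspace `K` of Lemma 4.2. -/
def bigK (D : TriangularData g) (θ : Module.Dual ℂ D.H) (f : Polynomial ℂ) :
    Submodule ℂ (Polynomial ℂ ⊗[ℂ] g) :=
  Submodule.span ℂ
    ({z | ∃ α ∈ D.P, α ∉ D.simpleRoots ∧
        ∃ x ∈ wtSpace g D.H α, ∃ p : Polynomial ℂ, z = (f * p) ⊗ₜ[ℂ] x} ∪
     {z | ∃ α ∈ D.simpleRoots,
        ∃ x ∈ wtSpace g D.H α, ∃ p : Polynomial ℂ, z = (X * f * p) ⊗ₜ[ℂ] x} ∪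
     {z | ∃ α ∈ D.P, α ≠ θ ∧
        ∃ x ∈ wtSpace g D.H (-α), ∃ p : Polynomial ℂ, z = (X * f * p) ⊗ₜ[ℂ] x} ∪
     {z | ∃ x ∈ wtSpace g D.H (-θ), ∃ p : Polynomial ℂ, z = (X ^ 2 * f * p) ⊗ₜ[ℂ] x} ∪
     {z | ∃ x ∈ D.H, ∃ p : Polynomial ℂ, z = (X * f * p) ⊗ₜ[ℂ] x})

/-- The subspace of the current algebra corresponding to
`ñ₊ = (g ⊗ tℂ[t]) ⊕ (n₊ ⊗ 1)`. -/
def ntModel (D : TriangularData g) : Submodule ℂ (Polynomial ℂ ⊗[ℂ] g) :=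
  Submodule.span ℂ
    ({z | ∃ (k : ℕ) (x : g), 1 ≤ k ∧ z = (X ^ k : Polynomial ℂ) ⊗ₜ[ℂ] x} ∪
     {z | ∃ x ∈ D.nPos, z = (1 : Polynomial ℂ) ⊗ₜ[ℂ] x})

/-- A realization of the Lie algebra `ñ₊`: a Lie algebra `nt` together with an
injective morphism to the current algebra with range `(g ⊗ tℂ[t]) ⊕ (n₊ ⊗ 1)`. -/
structure NtAlg (D : TriangularData g) (nt : Type) [LieRing nt] [LieAlgebra ℂ nt] where
  ι : nt →ₗ⁅ℂ⁆ Polynomial ℂ ⊗[ℂ] g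
  inj : Function.Injective ι
  range_eq : LinearMap.range (ι.toLinearMap) = ntModel g D

/-- Evaluation of the current algebra at a point `a ∈ ℂ`: `x ⊗ p(t) ↦ p(a) • x`. -/
def ev (a : ℂ) : (Polynomial ℂ ⊗[ℂ] g) →ₗ[ℂ] g :=
  (TensorProduct.lid ℂ g).toLinearMap ∘ₗ
    (TensorProduct.map (Polynomial.aeval a).toLinearMap LinearMap.id)

/-- The canonical embedding of the current algebra `g ⊗ ℂ[t]` into the model
`ℤ →₀ g` of the loop algebra `g ⊗ ℂ[t,t⁻¹]` (sending `x ⊗ tᵏ` to `single k x`). -/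
def toLoop : (Polynomial ℂ ⊗[ℂ] g) →ₗ[ℂ] (ℤ →₀ g) :=
  (Finsupp.lmapDomain g ℂ (Nat.cast : ℕ → ℤ)) ∘ₗ
    (TensorProduct.finsuppScalarLeft ℂ g ℕ).toLinearMap ∘ₗ
    (TensorProduct.congr ((Polynomial.toFinsuppIsoAlg ℂ).toLinearEquiv.trans
        (AddMonoidAlgebra.coeffLinearEquiv ℂ))
      (LinearEquiv.refl ℂ g)).toLinearMap

/-- A weight vector of `ñ₊` (viewed inside the current algebra): a nonzero element
`x ⊗ tᵏ` with `x` in `h` or in a root space. -/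
def IsWeightVec (D : TriangularData g) (w : Polynomial ℂ ⊗[ℂ] g) : Prop :=
  w ≠ 0 ∧ ∃ (k : ℕ) (x : g), w = (X ^ k : Polynomial ℂ) ⊗ₜ[ℂ] x ∧
    (x ∈ D.H ∨ ∃ α, IsRootOf g D.H α ∧ x ∈ wtSpace g D.H α)

/-- An element `z` of a Lie algebra `L` acts locally finitely on a module `V`. -/
def ActsLocallyFinitely (L : Type) [LieRing L] (V : Type) [AddCommGroup V] [Module ℂ V]
    [LieRingModule L V] (z : L) : Prop :=
  ∀ v : V, ∃ W : Submodule ℂ V, v ∈ W ∧ FiniteDimensional ℂ W ∧ ∀ w ∈ W, ⁅z, w⁆ ∈ W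

/-- A realization of the affine Lie algebra `ĝ = (g ⊗ ℂ[t,t⁻¹]) ⊕ ℂK` (without
derivation): a Lie algebra `gh` with a linear equivalence `e` with the model space
`(ℤ →₀ g) × ℂ` such that `e (single p x, 0) = x ⊗ tᵖ`, `e (0,1) = K` is central, and
`[x ⊗ tᵖ, y ⊗ t^q] = [x,y] ⊗ t^{p+q} + p δ_{p+q,0} κ(x,y) K`, `κ` the Killing form. -/
structure AffineAlg (gh : Type) [LieRing gh] [LieAlgebra ℂ gh] where
  e : ((ℤ →₀ g) × ℂ) ≃ₗ[ℂ] gh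
  brkt : ∀ (p q : ℤ) (x y : g),
    ⁅e (Finsupp.single p x, 0), e (Finsupp.single q y, 0)⁆ =
      e (Finsupp.single (p + q) ⁅x, y⁆,
        if p + q = 0 then (p : ℂ) * killingForm ℂ g x y else 0)
  central : ∀ z : gh, ⁅e (0, 1), z⁆ = 0

/-- A realization of the affine Kac–Moody algebra `t̃g = (g ⊗ ℂ[t,t⁻¹]) ⊕ ℂK ⊕ ℂd`:
as in `AffineAlg`, with moreover `e (0,0,1) = d` satisfying `[d, x ⊗ tᵖ] = p x ⊗ tᵖ`. -/
structure AffineAlgD (gt : Type) [LieRing gt] [LieAlgebra ℂ gt] where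
  e : ((ℤ →₀ g) × ℂ × ℂ) ≃ₗ[ℂ] gt
  brkt : ∀ (p q : ℤ) (x y : g),
    ⁅e (Finsupp.single p x, 0, 0), e (Finsupp.single q y, 0, 0)⁆ =
      e (Finsupp.single (p + q) ⁅x, y⁆,
        (if p + q = 0 then (p : ℂ) * killingForm ℂ g x y else 0), 0)
  central : ∀ z : gt, ⁅e (0, 1, 0), z⁆ = 0
  dBrkt : ∀ (p : ℤ) (x : g),
    ⁅e (0, 0, 1), e (Finsupp.single p x, 0, 0)⁆ = e (Finsupp.single p ((p : ℂ) • x), 0, 0)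

variable {g}

/-- `V` is the irreducible highest weight `g`-module with highest weight `lam`:
it is irreducible and has a highest weight vector of weight `lam`. -/
structure IsHWModule (D : TriangularData g) (lam : Module.Dual ℂ D.H) (V : Type)
    [AddCommGroup V] [Module ℂ V] [LieRingModule g V] [LieModule ℂ g V] where
  v₀ : V
  ne : v₀ ≠ 0
  hwN : ∀ x ∈ D.nPos, ⁅x, v₀⁆ = 0
  hwH : ∀ h : D.H, ⁅(h : g), v₀⁆ = lam h • v₀
  irred : IsSimpleOrder (LieSubmodule ℂ g V)

/-- `E` is the evaluation module `E(λ, a) = V₁ ⊗ ⋯ ⊗ V_m` over `ĝ`: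
`(x ⊗ tᵏ) · (v₁ ⊗ ⋯ ⊗ v_m) = Σᵢ aᵢᵏ v₁ ⊗ ⋯ ⊗ (x · vᵢ) ⊗ ⋯ ⊗ v_m`, and `K` acts by `0`. -/
structure EvalModule {gh : Type} [LieRing gh] [LieAlgebra ℂ gh] (A : AffineAlg g gh)
    {m : ℕ} (a : Fin m → ℂ) (V : Fin m → Type) [∀ i, AddCommGroup (V i)]
    [∀ i, Module ℂ (V i)] [∀ i, LieRingModule g (V i)] [∀ i, LieModule ℂ g (V i)]
    (E : Type) [AddCommGroup E] [Module ℂ E] [LieRingModule gh E] [LieModule ℂ gh E] where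
  ψ : E ≃ₗ[ℂ] PiTensorProduct ℂ V
  act : ∀ (k : ℤ) (x : g) (v : ∀ i, V i),
    ⁅A.e (Finsupp.single k x, 0), ψ.symm (PiTensorProduct.tprod ℂ v)⁆ =
      ∑ i, (a i) ^ k • ψ.symm (PiTensorProduct.tprod ℂ (Function.update v i ⁅x, v i⁆))
  kAct : ∀ w : E, ⁅A.e (0, 1), w⁆ = 0

/-- `V` is the `t̃g`-module `M[d] = Ind_{ĝ}^{t̃g} M` induced from a `ĝ`-module `M`.
As a vector space `M[d] = ℂ[d] ⊗ M` (modelled by `ℕ →₀ M`, `single n v = dⁿ ⊗ v`);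
`d` shifts the degree and `ĝ` acts on `d⁰ ⊗ M` as on `M`.  These data determine the
`t̃g`-module structure uniquely. -/
structure IndModule {gh gt : Type} [LieRing gh] [LieAlgebra ℂ gh] [LieRing gt]
    [LieAlgebra ℂ gt] (T : AffineAlgD g gt) (A : AffineAlg g gh)
    (M : Type) [AddCommGroup M] [Module ℂ M] [LieRingModule gh M]
    (V : Type) [AddCommGroup V] [Module ℂ V] [LieRingModule gt V] where
  φ : (ℕ →₀ M) ≃ₗ[ℂ] V
  dAct : ∀ (n : ℕ) (v : M),
    ⁅T.e (0, 0, 1), φ (Finsupp.single n v)⁆ = φ (Finsupp.single (n + 1) v)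
  rest : ∀ (u : (ℤ →₀ g) × ℂ) (v : M),
    ⁅T.e (u.1, u.2, 0), φ (Finsupp.single 0 v)⁆ = φ (Finsupp.single 0 ⁅A.e u, v⁆)

/-- `S` is the `ñ₊`-module `S(η, λ, a) = ℂ v_η ⊗ L(λ₁) ⊗ ⋯ ⊗ L(λ_m)`:
`(x ⊗ p(t)) · (v₁ ⊗ ⋯ ⊗ v_m) = η(x ⊗ p(t)) (v₁ ⊗ ⋯ ⊗ v_m) + Σᵢ p(aᵢ) v₁ ⊗ ⋯ ⊗ (x vᵢ) ⊗ ⋯ ⊗ v_m`. -/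
structure SModule {nt : Type} [LieRing nt] [LieAlgebra ℂ nt] {D : TriangularData g}
    (NT : NtAlg g D nt) (η : nt →ₗ⁅ℂ⁆ ℂ) {m : ℕ} (a : Fin m → ℂ)
    (V : Fin m → Type) [∀ i, AddCommGroup (V i)] [∀ i, Module ℂ (V i)]
    [∀ i, LieRingModule g (V i)]
    (S : Type) [AddCommGroup S] [Module ℂ S] [LieRingModule nt S] where
  ψ : S ≃ₗ[ℂ] PiTensorProduct ℂ V
  act : ∀ (z : nt) (v : ∀ i, V i),
    ⁅z, ψ.symm (PiTensorProduct.tprod ℂ v)⁆ = η z • ψ.symm (PiTensorProduct.tprod ℂ v) +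
      ∑ i, ψ.symm (PiTensorProduct.tprod ℂ (Function.update v i ⁅ev g (a i) (NT.ι z), v i⁆))

/-- `V` is the irreducible highest weight `ĝ`-module with highest weight
`γ ∈ (h ⊕ ℂK)*`. -/
structure HWModuleAff {gh : Type} [LieRing gh] [LieAlgebra ℂ gh] (A : AffineAlg g gh)
    (D : TriangularData g) (γ : Module.Dual ℂ (↥D.H × ℂ)) (V : Type)
    [AddCommGroup V] [Module ℂ V] [LieRingModule gh V] [LieModule ℂ gh V] where
  v₀ : V
  ne : v₀ ≠ 0
  hwLoop : ∀ k : ℕ, 1 ≤ k → ∀ x : g, ⁅A.e (Finsupp.single (k : ℤ) x, 0), v₀⁆ = 0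
  hwN : ∀ x ∈ D.nPos, ⁅A.e (Finsupp.single 0 x, 0), v₀⁆ = 0
  hwH : ∀ (h : D.H) (c : ℂ), ⁅A.e (Finsupp.single 0 (h : g), c), v₀⁆ = γ (h, c) • v₀
  irred : IsSimpleOrder (LieSubmodule ℂ gh V)

/-- `W` is an irreducible Whittaker `ĝ`-module of type `η : ñ₊ → ℂ`. -/
structure WhittakerAff {gh : Type} [LieRing gh] [LieAlgebra ℂ gh] (A : AffineAlg g gh)
    {D : TriangularData g} {nt : Type} [LieRing nt] [LieAlgebra ℂ nt] (NT : NtAlg g D nt)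
    (η : nt →ₗ⁅ℂ⁆ ℂ) (W : Type)
    [AddCommGroup W] [Module ℂ W] [LieRingModule gh W] [LieModule ℂ gh W] where
  v₀ : W
  ne : v₀ ≠ 0
  wh : ∀ z : nt, ⁅A.e (toLoop g (NT.ι z), 0), v₀⁆ = η z • v₀
  irred : IsSimpleOrder (LieSubmodule ℂ gh W)

/-- `MS` is the induced `ĝ`-module `Ind_{ñ₊}^{ĝ} S`, characterized by its universal
property. -/
structure IndFromNt {gh : Type} [LieRing gh] [LieAlgebra ℂ gh] (A : AffineAlg g gh)
    {D : TriangularData g} {nt : Type} [LieRing nt] [LieAlgebra ℂ nt] (NT : NtAlg g D nt)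
    (S : Type) [AddCommGroup S] [Module ℂ S] [LieRingModule nt S]
    (MS : Type) [AddCommGroup MS] [Module ℂ MS] [LieRingModule gh MS]
    [LieModule ℂ gh MS] where
  ι₀ : S →ₗ[ℂ] MS
  compat : ∀ (z : nt) (s : S), ⁅A.e (toLoop g (NT.ι z), 0), ι₀ s⁆ = ι₀ ⁅z, s⁆
  univ : ∀ (W : Type) [AddCommGroup W] [Module ℂ W] [LieRingModule gh W]
    [LieModule ℂ gh W] (f : S →ₗ[ℂ] W),
    (∀ (z : nt) (s : S), ⁅A.e (toLoop g (NT.ι z), 0), f s⁆ = f ⁅z, s⁆) →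
    ∃! F : MS →ₗ⁅ℂ,gh⁆ W, F.toLinearMap ∘ₗ ι₀ = f

/-- `M0` is the universal Whittaker module `M(η) = Ind_{ñ₊}^{ĝ} ℂ_η`, characterized
by its universal property. -/
structure UnivWhittaker {gh : Type} [LieRing gh] [LieAlgebra ℂ gh] (A : AffineAlg g gh)
    {D : TriangularData g} {nt : Type} [LieRing nt] [LieAlgebra ℂ nt] (NT : NtAlg g D nt)
    (η : nt →ₗ⁅ℂ⁆ ℂ) (M0 : Type) [AddCommGroup M0] [Module ℂ M0] [LieRingModule gh M0]
    [LieModule ℂ gh M0] where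
  u₀ : M0
  rel : ∀ z : nt, ⁅A.e (toLoop g (NT.ι z), 0), u₀⁆ = η z • u₀
  univ : ∀ (W : Type) [AddCommGroup W] [Module ℂ W] [LieRingModule gh W]
    [LieModule ℂ gh W] (w : W),
    (∀ z : nt, ⁅A.e (toLoop g (NT.ι z), 0), w⁆ = η z • w) →
    ∃! F : M0 →ₗ⁅ℂ,gh⁆ W, F u₀ = w

variable (g)

/-- A bundled Lie module over a complex Lie algebra `L`. -/
structure LieModOf (L : Type) [LieRing L] [LieAlgebra ℂ L] : Type 1 where
  carrier : Type
  [ac : AddCommGroup carrier]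
  [mo : Module ℂ carrier]
  [lrm : LieRingModule L carrier]
  [lm : LieModule ℂ L carrier]

attribute [instance] LieModOf.ac LieModOf.mo LieModOf.lrm LieModOf.lm

/-- there is an isomorphism of `ĝ`-modules
`Ind_{ñ₊}^{ĝ} S(η, λ, a) ≅ E(λ, a) ⊗ M(η)`. -/
theorem statement13 (g : Type) [LieRing g] [LieAlgebra ℂ g] [FiniteDimensional ℂ g]
    [LieAlgebra.IsSimple ℂ g] (D : TriangularData g)
    (gh : Type) [LieRing gh] [LieAlgebra ℂ gh] (A : AffineAlg g gh)
    (nt : Type) [LieRing nt] [LieAlgebra ℂ nt] (NT : NtAlg g D nt)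
    (η : nt →ₗ⁅ℂ⁆ ℂ)
    (m : ℕ) (a : Fin m → ℂ) (ha : ∀ i, a i ≠ 0) (hinj : Function.Injective a)
    (lam : Fin m → Module.Dual ℂ D.H)
    (V : Fin m → Type) [∀ i, AddCommGroup (V i)] [∀ i, Module ℂ (V i)]
    [∀ i, LieRingModule g (V i)] [∀ i, LieModule ℂ g (V i)]
    (hV : ∀ i, IsHWModule D (lam i) (V i))
    (S : Type) [AddCommGroup S] [Module ℂ S] [LieRingModule nt S] [LieModule ℂ nt S]
    (hS : SModule NT η a V S)
    (E : Type) [AddCommGroup E] [Module ℂ E] [LieRingModule gh E] [LieModule ℂ gh E]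
    (hE : EvalModule A a V E)
    (MS : Type) [AddCommGroup MS] [Module ℂ MS] [LieRingModule gh MS] [LieModule ℂ gh MS]
    (hMS : IndFromNt A NT S MS)
    (Mη : Type) [AddCommGroup Mη] [Module ℂ Mη] [LieRingModule gh Mη] [LieModule ℂ gh Mη]
    (hMη : UnivWhittaker A NT η Mη) :
    Nonempty (MS ≃ₗ⁅ℂ,gh⁆ (E ⊗[ℂ] Mη)) := by
  classical
  -- basic computations for `toLoop` and `ev` on monomials
  have toLoop_monomial : ∀ (n : ℕ) (r : ℂ) (x : g),
      toLoop g ((monomial n r : Polynomial ℂ) ⊗ₜ[ℂ] x) = Finsupp.single (n : ℤ) (r • x) := by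
    intro n r x
    rw [toLoop]
    simp only [LinearMap.coe_comp, Function.comp_apply, LinearEquiv.coe_coe]
    erw [TensorProduct.congr_tmul]
    rw [show (((toFinsuppIsoAlg ℂ).toLinearEquiv.trans
        (AddMonoidAlgebra.coeffLinearEquiv ℂ)) (monomial n r) : ℕ →₀ ℂ) = Finsupp.single n r by
      simp [toFinsuppIsoAlg, toFinsuppIso, toFinsupp_monomial]]
    erw [TensorProduct.finsuppScalarLeft_apply_tmul]
    rw [Finsupp.sum_single_index (by simp)]
    simp [Finsupp.lmapDomain, Finsupp.mapDomain_single]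
  have ev_monomial : ∀ (b : ℂ) (n : ℕ) (r : ℂ) (x : g),
      ev g b ((monomial n r : Polynomial ℂ) ⊗ₜ[ℂ] x) = (r * b ^ n) • x := by
    intro b n r x
    simp [ev, aeval_monomial]
  -- the action of a current-algebra element on a pure tensor of the evaluation module
  have evalAct : ∀ (c : Polynomial ℂ ⊗[ℂ] g) (v : ∀ i, V i),
      ⁅A.e (toLoop g c, 0), hE.ψ.symm (PiTensorProduct.tprod ℂ v)⁆ =
      ∑ i, hE.ψ.symm (PiTensorProduct.tprod ℂ
        (Function.update v i ⁅ev g (a i) c, v i⁆)) := by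
    have hzero : ∀ v : ∀ i, V i,
        ⁅A.e (toLoop g (0 : Polynomial ℂ ⊗[ℂ] g), 0), hE.ψ.symm (PiTensorProduct.tprod ℂ v)⁆ =
        ∑ i, hE.ψ.symm (PiTensorProduct.tprod ℂ
          (Function.update v i ⁅ev g (a i) (0 : Polynomial ℂ ⊗[ℂ] g), v i⁆)) := by
      intro v
      rw [map_zero, show ((0 : ℤ →₀ g), (0 : ℂ)) = (0 : (ℤ →₀ g) × ℂ) from rfl,
        map_zero, zero_lie]
      symm
      apply Finset.sum_eq_zero
      intro i _
      rw [map_zero, zero_lie, MultilinearMap.map_update_zero, map_zero]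
    have hadd : ∀ (c c' : Polynomial ℂ ⊗[ℂ] g) (v : ∀ i, V i),
        (⁅A.e (toLoop g c, 0), hE.ψ.symm (PiTensorProduct.tprod ℂ v)⁆ =
          ∑ i, hE.ψ.symm (PiTensorProduct.tprod ℂ
            (Function.update v i ⁅ev g (a i) c, v i⁆))) →
        (⁅A.e (toLoop g c', 0), hE.ψ.symm (PiTensorProduct.tprod ℂ v)⁆ =
          ∑ i, hE.ψ.symm (PiTensorProduct.tprod ℂ
            (Function.update v i ⁅ev g (a i) c', v i⁆))) →
        ⁅A.e (toLoop g (c + c'), 0), hE.ψ.symm (PiTensorProduct.tprod ℂ v)⁆ =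
          ∑ i, hE.ψ.symm (PiTensorProduct.tprod ℂ
            (Function.update v i ⁅ev g (a i) (c + c'), v i⁆)) := by
      intro c c' v h h'
      rw [map_add, show ((toLoop g c + toLoop g c', (0 : ℂ)) : (ℤ →₀ g) × ℂ)
          = (toLoop g c, 0) + (toLoop g c', 0) by rw [Prod.mk_add_mk, add_zero],
        map_add, add_lie, h, h', ← Finset.sum_add_distrib]
      refine Finset.sum_congr rfl fun i _ => ?_
      rw [map_add, add_lie, MultilinearMap.map_update_add, map_add]
    intro c v
    induction c using TensorProduct.induction_on with
    | zero => exact hzero v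
    | add c c' h h' => exact hadd c c' v h h'
    | tmul p x =>
      induction p using Polynomial.induction_on' with
      | add p q hp hq =>
        rw [TensorProduct.add_tmul]
        exact hadd _ _ v hp hq
      | monomial n r =>
        rw [toLoop_monomial n r x, hE.act (n : ℤ) (r • x) v]
        refine Finset.sum_congr rfl fun i _ => ?_
        rw [ev_monomial (a i) n r x, smul_lie, smul_lie,
          MultilinearMap.map_update_smul, MultilinearMap.map_update_smul,
          map_smul, map_smul, smul_smul, zpow_natCast, mul_comm]
  -- the comparison isomorphism `S ≃ E` of vector spaces
  set E2 : S ≃ₗ[ℂ] E := hS.ψ ≪≫ₗ hE.ψ.symm with hE2def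
  have hE2 : ∀ s : S, E2 s = hE.ψ.symm (hS.ψ s) := fun s => rfl
  -- the key compatibility: transporting the `ñ₊`-action on `S` to `E`
  have keyE : ∀ (z : nt) (s : S),
      E2 ⁅z, s⁆ = η z • E2 s + ⁅A.e (toLoop g (NT.ι z), 0), E2 s⁆ := by
    intro z s
    have main : ∀ (y : PiTensorProduct ℂ V),
        y ∈ Submodule.span ℂ (Set.range (PiTensorProduct.tprod ℂ (s := V))) →
        hE.ψ.symm (hS.ψ ⁅z, hS.ψ.symm y⁆) =
          η z • hE.ψ.symm y + ⁅A.e (toLoop g (NT.ι z), 0), hE.ψ.symm y⁆ := by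
      intro y hy
      induction hy using Submodule.span_induction with
      | mem y hy =>
        obtain ⟨v, rfl⟩ := hy
        rw [hS.act z v]
        simp only [map_add, map_smul, map_sum, LinearEquiv.apply_symm_apply]
        rw [evalAct (NT.ι z) v]
      | zero => simp
      | add y y' _ _ h h' =>
        simp only [map_add, lie_add, smul_add] at h h' ⊢
        rw [h, h']
        abel
      | smul c y _ h =>
        simp only [map_smul, lie_smul] at h ⊢
        rw [h, smul_add, smul_comm c (η z)]
    have := main (hS.ψ s) (by rw [PiTensorProduct.span_tprod_eq_top]; trivial)
    simpa [hE2] using this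
  -- the Whittaker vector `φ : E →ₗ MS`
  set φ : E →ₗ[ℂ] MS := hMS.ι₀ ∘ₗ E2.symm.toLinearMap with hφdef
  have hφapp : ∀ e : E, φ e = hMS.ι₀ (E2.symm e) := fun e => rfl
  have hφ : ∀ z : nt, ⁅A.e (toLoop g (NT.ι z), 0), φ⁆ = η z • φ := by
    intro z
    apply LinearMap.ext
    intro e
    rw [LieHom.lie_apply, LinearMap.smul_apply, hφapp, hφapp,
      hMS.compat z (E2.symm e)]
    have h1 := keyE z (E2.symm e)
    rw [LinearEquiv.apply_symm_apply] at h1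
    have h2 : ⁅z, E2.symm e⁆ = η z • E2.symm e + E2.symm ⁅A.e (toLoop g (NT.ι z), 0), e⁆ := by
      apply E2.injective
      rw [h1, map_add, map_smul, LinearEquiv.apply_symm_apply, LinearEquiv.apply_symm_apply]
    rw [h2, map_add, map_smul]
    abel
  obtain ⟨Φ, hΦ₀, -⟩ := hMη.univ (E →ₗ[ℂ] MS) φ hφ
  -- the map `G : E ⊗ Mη → MS`
  set G0 : E ⊗[ℂ] Mη →ₗ[ℂ] MS := TensorProduct.lift (LinearMap.flip Φ.toLinearMap) with hG0def
  have hG0 : ∀ (e : E) (u : Mη), G0 (e ⊗ₜ[ℂ] u) = Φ u e := fun e u => rfl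
  have hGlie : ∀ (x : gh) (t : E ⊗[ℂ] Mη), G0 ⁅x, t⁆ = ⁅x, G0 t⁆ := by
    intro x t
    induction t using TensorProduct.induction_on with
    | zero => simp
    | add t t' h h' => rw [lie_add, map_add, h, h', map_add, lie_add]
    | tmul e u =>
      rw [TensorProduct.LieModule.lie_tmul_right, map_add, hG0, hG0, hG0,
        Φ.map_lie, LieHom.lie_apply]
      abel
  set G : E ⊗[ℂ] Mη →ₗ⁅ℂ,gh⁆ MS := { G0 with map_lie' := fun {x t} => hGlie x t } with hGdef
  have hGapp : ∀ (e : E) (u : Mη), G (e ⊗ₜ[ℂ] u) = Φ u e := fun e u => rfl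
  -- the map `F : MS → E ⊗ Mη` from the universal property of induction
  set f : S →ₗ[ℂ] E ⊗[ℂ] Mη :=
    ((TensorProduct.mk ℂ E Mη).flip hMη.u₀) ∘ₗ E2.toLinearMap with hfdef
  have hfapp : ∀ s : S, f s = (E2 s) ⊗ₜ[ℂ] hMη.u₀ := fun s => rfl
  have hfc : ∀ (z : nt) (s : S), ⁅A.e (toLoop g (NT.ι z), 0), f s⁆ = f ⁅z, s⁆ := by
    intro z s
    rw [hfapp, hfapp, TensorProduct.LieModule.lie_tmul_right, hMη.rel z, keyE z s,
      TensorProduct.add_tmul, TensorProduct.tmul_smul, TensorProduct.smul_tmul']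
    abel
  obtain ⟨F, hF, -⟩ := hMS.univ (E ⊗[ℂ] Mη) f hfc
  have hFι : ∀ s : S, F (hMS.ι₀ s) = (E2 s) ⊗ₜ[ℂ] hMη.u₀ := by
    intro s
    have := LinearMap.congr_fun hF s
    simpa [hfapp] using this
  -- `G ∘ F = id`
  obtain ⟨F₀, -, hF₀u⟩ := hMS.univ MS hMS.ι₀ hMS.compat
  have h1 : G.comp F = F₀ := by
    apply hF₀u
    apply LinearMap.ext
    intro s
    show G (F (hMS.ι₀ s)) = hMS.ι₀ s
    rw [hFι, hGapp, hΦ₀, hφapp, LinearEquiv.symm_apply_apply]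
  have h2 : (LieModuleHom.id : MS →ₗ⁅ℂ,gh⁆ MS) = F₀ := by
    apply hF₀u
    apply LinearMap.ext
    intro s
    rfl
  have hGF : ∀ w : MS, G (F w) = w := by
    intro w
    have : (G.comp F) w = (LieModuleHom.id : MS →ₗ⁅ℂ,gh⁆ MS) w := by rw [h1, h2]
    simpa using this
  -- `F ∘ G = id`, via the universal property of the universal Whittaker module
  set w₀ : E →ₗ[ℂ] E ⊗[ℂ] Mη := (TensorProduct.mk ℂ E Mη).flip hMη.u₀ with hw₀def
  have hw₀app : ∀ e : E, w₀ e = e ⊗ₜ[ℂ] hMη.u₀ := fun e => rfl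
  have hw₀ : ∀ z : nt, ⁅A.e (toLoop g (NT.ι z), 0), w₀⁆ = η z • w₀ := by
    intro z
    apply LinearMap.ext
    intro e
    rw [LieHom.lie_apply, LinearMap.smul_apply, hw₀app, hw₀app,
      TensorProduct.LieModule.lie_tmul_right, hMη.rel z, TensorProduct.tmul_smul]
    abel
  obtain ⟨H₀, -, hH₀u⟩ := hMη.univ (E →ₗ[ℂ] E ⊗[ℂ] Mη) w₀ hw₀
  set K : E ⊗[ℂ] Mη →ₗ[ℂ] E ⊗[ℂ] Mη := F.toLinearMap ∘ₗ G.toLinearMap with hKdef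
  have hKapp : ∀ t, K t = F (G t) := fun t => rfl
  have hKlie : ∀ (x : gh) (t : E ⊗[ℂ] Mη), K ⁅x, t⁆ = ⁅x, K t⁆ := by
    intro x t
    rw [hKapp, hKapp, G.map_lie, F.map_lie]
  have map1lie : ∀ (x : gh) (u : Mη),
      (TensorProduct.mk ℂ E Mη).flip ⁅x, u⁆ = ⁅x, (TensorProduct.mk ℂ E Mη).flip u⁆ := by
    intro x u
    apply LinearMap.ext
    intro e
    rw [LieHom.lie_apply]
    show e ⊗ₜ[ℂ] ⁅x, u⁆ = ⁅x, e ⊗ₜ[ℂ] u⁆ - ⁅x, e⁆ ⊗ₜ[ℂ] u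
    rw [TensorProduct.LieModule.lie_tmul_right]
    abel
  set Map1 : Mη →ₗ⁅ℂ,gh⁆ (E →ₗ[ℂ] E ⊗[ℂ] Mη) :=
    { (TensorProduct.mk ℂ E Mη).flip with map_lie' := fun {x u} => map1lie x u } with hMap1def
  set Map2 : Mη →ₗ⁅ℂ,gh⁆ (E →ₗ[ℂ] E ⊗[ℂ] Mη) :=
    { (LinearMap.llcomp ℂ E (E ⊗[ℂ] Mη) (E ⊗[ℂ] Mη) K) ∘ₗ (TensorProduct.mk ℂ E Mη).flip with
      map_lie' := by
        intro x u
        apply LinearMap.ext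
        intro e
        show K (e ⊗ₜ[ℂ] ⁅x, u⁆) = ⁅x, K ∘ₗ (TensorProduct.mk ℂ E Mη).flip u⁆ e
        rw [LieHom.lie_apply]
        show K (e ⊗ₜ[ℂ] ⁅x, u⁆) = ⁅x, K (e ⊗ₜ[ℂ] u)⁆ - K (⁅x, e⁆ ⊗ₜ[ℂ] u)
        rw [← hKlie x (e ⊗ₜ[ℂ] u), ← map_sub, TensorProduct.LieModule.lie_tmul_right]
        congr 1
        abel } with hMap2def
  have hMap1 : Map1 = H₀ := by
    apply hH₀u
    rfl
  have hMap2 : Map2 = H₀ := by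
    apply hH₀u
    apply LinearMap.ext
    intro e
    show K (e ⊗ₜ[ℂ] hMη.u₀) = w₀ e
    rw [hKapp, hGapp, hΦ₀, hφapp, hFι, LinearEquiv.apply_symm_apply, hw₀app]
  have hFG : ∀ t : E ⊗[ℂ] Mη, F (G t) = t := by
    intro t
    induction t using TensorProduct.induction_on with
    | zero => simp
    | add t t' h h' =>
      rw [show G (t + t') = G t + G t' from G.map_add t t',
        show ∀ y y' : MS, F (y + y') = F y + F y' from fun y y' => F.map_add y y', h, h']
    | tmul e u =>
      have : Map2 u e = Map1 u e := by rw [hMap1, hMap2]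
      exact this
  exact ⟨{ F with invFun := G, left_inv := hGF, right_inv := hFG }⟩

end AffinePaper
end
end

section
/- Let M and M' be irreducible ĝ-modules. Then M[d] ≅ M'[d] as t̃g-modules if and only if M ≅ M' as ĝ-modules. -/
/- Common framework for formalizing statements from
   "Irreducible modules over affine Kac–Moody algebras which are locally finite
    over the positive part" (Guo–Zhao).

   Conventions:
   * `g` is a finite-dimensional simple complex Lie algebra.
   * The loop algebra `g ⊗ ℂ[t,t⁻¹]` is modelled by the vector space `ℤ →₀ g`
     (`Finsupp.single p x` corresponds to `x ⊗ tᵖ`).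
   * The affine algebra `ĝ = g ⊗ ℂ[t,t⁻¹] ⊕ ℂK` is any Lie algebra equipped with
     an `AffineAlg` structure (a linear equivalence with `(ℤ →₀ g) × ℂ` fixing the
     bracket on generators, where `(0,1)` is the central element `K`).
   * Similarly `t̃g = ĝ ⊕ ℂd` is any Lie algebra with an `AffineAlgD` structure on
     `(ℤ →₀ g) × ℂ × ℂ`, where `(0,1,0) = K` and `(0,0,1) = d`.
   * The current algebra `g ⊗ ℂ[t]` is `Polynomial ℂ ⊗[ℂ] g`, and the positive part
     `ñ₊ = (g ⊗ tℂ[t]) ⊕ (n₊ ⊗ 1)` is any Lie algebra `nt` with an `NtAlg` structure: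
     an injective Lie algebra morphism into the current algebra with range `ñ₊`.
   * Induced modules are specified by structures that pin them down uniquely up to
     isomorphism (`IndModule` via the PBW description `ℂ[d] ⊗ M`, and universal
     properties for induction from `ñ₊`).
-/

open scoped TensorProduct
open Polynomial

noncomputable section

namespace AffinePaper

variable (g : Type) [LieRing g] [LieAlgebra ℂ g]

variable {g}

variable (g)

variable {g}

attribute [local instance 100] LieRing.ofAssociativeRing

variable (g)

section Statement16Aux

open Finsupp

variable {g : Type} [LieRing g] [LieAlgebra ℂ g]
variable {gh : Type} [LieRing gh] [LieAlgebra ℂ gh]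
variable {gt : Type} [LieRing gt] [LieAlgebra ℂ gt]

/-- The degree derivation on the loop part of the affine algebra. -/
def Dmap (g : Type) [LieRing g] [LieAlgebra ℂ g] : (ℤ →₀ g) →ₗ[ℂ] (ℤ →₀ g) :=
  Finsupp.lsum ℂ fun p => (p : ℂ) • Finsupp.lsingle p

lemma Dmap_single (p : ℤ) (x : g) :
    Dmap g (Finsupp.single p x) = Finsupp.single p ((p : ℂ) • x) := by
  simp [Dmap, Finsupp.smul_single]

lemma d_bracket (T : AffineAlgD g gt) (u : (ℤ →₀ g) × ℂ) :
    ⁅T.e (0, 0, 1), T.e (u.1, u.2, 0)⁆ = T.e (Dmap g u.1, 0, 0) := by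
  have key : ∀ w : ℤ →₀ g, ⁅T.e (0, 0, 1), T.e (w, 0, 0)⁆ = T.e (Dmap g w, 0, 0) := by
    have h := Finsupp.lhom_ext (φ := (LieModule.toEnd ℂ gt gt (T.e (0,0,1))).comp
        (T.e.toLinearMap.comp (LinearMap.inl ℂ (ℤ →₀ g) (ℂ × ℂ))))
      (ψ := T.e.toLinearMap.comp ((LinearMap.inl ℂ (ℤ →₀ g) (ℂ × ℂ)).comp (Dmap g)))
      (fun p x => by
        simp only [LinearMap.coe_comp, Function.comp_apply, LinearMap.inl_apply,
          LinearEquiv.coe_coe, LieModule.toEnd_apply_apply, Dmap_single]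
        exact T.dBrkt p x)
    intro w
    exact LinearMap.congr_fun h w
  have hK : ⁅T.e (0, 0, 1), T.e ((0 : ℤ →₀ g), u.2, 0)⁆ = 0 := by
    have h1 : (((0 : ℤ →₀ g), u.2, (0:ℂ)) : (ℤ →₀ g) × ℂ × ℂ)
        = u.2 • (((0 : ℤ →₀ g), (1:ℂ), (0:ℂ)) : (ℤ →₀ g) × ℂ × ℂ) := by
      simp [Prod.smul_def]
    rw [h1, map_smul, lie_smul, ← lie_skew, T.central, neg_zero, smul_zero]
  have hsplit : ((u.1, u.2, (0:ℂ)) : (ℤ →₀ g) × ℂ × ℂ) = (u.1, 0, 0) + (0, u.2, 0) := by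
    simp
  rw [hsplit, map_add, lie_add, key, hK, add_zero]

variable {M : Type} [AddCommGroup M] [Module ℂ M]

/-- The action of the loop-plus-K part on the induced module `M[d]`, expressed on the
model `ℕ →₀ M`. -/
def actF (A : AffineAlg g gh) [LieRingModule gh M] :
    ℕ → ((ℤ →₀ g) × ℂ) → M → (ℕ →₀ M)
  | 0, u, v => Finsupp.single 0 ⁅A.e u, v⁆
  | n+1, u, v => actF A n (-(Dmap g u.1), 0) v + Finsupp.mapDomain (· + 1) (actF A n u v)

variable {Vd : Type} [AddCommGroup Vd] [Module ℂ Vd]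

lemma d_act {T : AffineAlgD g gt} {A : AffineAlg g gh} [LieRingModule gh M]
    [LieRingModule gt Vd] [LieModule ℂ gt Vd]
    (hInd : IndModule T A M Vd) (w : ℕ →₀ M) :
    ⁅T.e (0, 0, 1), hInd.φ w⁆ = hInd.φ (Finsupp.mapDomain (· + 1) w) := by
  have h := Finsupp.lhom_ext
    (φ := (LieModule.toEnd ℂ gt Vd (T.e (0,0,1))).comp hInd.φ.toLinearMap)
    (ψ := hInd.φ.toLinearMap.comp (Finsupp.lmapDomain M ℂ (· + 1)))
    (fun n v => by
      simp only [LinearMap.coe_comp, Function.comp_apply, LinearEquiv.coe_coe,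
        LieModule.toEnd_apply_apply, Finsupp.lmapDomain_apply, Finsupp.mapDomain_single]
      exact hInd.dAct n v)
  exact LinearMap.congr_fun h w

lemma act_single {T : AffineAlgD g gt} {A : AffineAlg g gh} [LieRingModule gh M]
    [LieRingModule gt Vd] [LieModule ℂ gt Vd]
    (hInd : IndModule T A M Vd) (n : ℕ) (u : (ℤ →₀ g) × ℂ) (v : M) :
    ⁅T.e (u.1, u.2, 0), hInd.φ (Finsupp.single n v)⁆ = hInd.φ (actF A n u v) := by
  induction n generalizing u with
  | zero => exact hInd.rest u v
  | succ n ih =>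
    have hd : hInd.φ (Finsupp.single (n+1) v) = ⁅T.e (0,0,1), hInd.φ (Finsupp.single n v)⁆ :=
      (hInd.dAct n v).symm
    have h1 : ⁅T.e (u.1, u.2, 0), T.e (0, 0, 1)⁆
        = T.e ((-(Dmap g u.1) : ℤ →₀ g), 0, 0) := by
      rw [← lie_skew, d_bracket, ← map_neg]
      congr 1
      simp
    rw [hd, leibniz_lie, h1, ih ((-(Dmap g u.1), 0) : (ℤ →₀ g) × ℂ), ih u, d_act hInd,
      ← map_add]
    rfl

lemma actF_apply_gt (A : AffineAlg g gh) [LieRingModule gh M] :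
    ∀ (n : ℕ) (u : (ℤ →₀ g) × ℂ) (v : M) (m : ℕ), n < m → actF A n u v m = 0 := by
  intro n
  induction n with
  | zero =>
    intro u v m hm
    simp only [actF]
    exact Finsupp.single_eq_of_ne (by omega)
  | succ n ih =>
    intro u v m hm
    simp only [actF, Finsupp.add_apply]
    obtain ⟨k, rfl⟩ : ∃ k, m = k + 1 := ⟨m - 1, by omega⟩
    rw [ih _ _ _ (by omega),
      Finsupp.mapDomain_apply (f := (· + 1)) (add_left_injective 1) _ k,
      ih _ _ _ (by omega), add_zero]

lemma actF_apply_self (A : AffineAlg g gh) [LieRingModule gh M] :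
    ∀ (n : ℕ) (u : (ℤ →₀ g) × ℂ) (v : M), actF A n u v n = ⁅A.e u, v⁆ := by
  intro n
  induction n with
  | zero => intro u v; simp [actF]
  | succ n ih =>
    intro u v
    simp only [actF, Finsupp.add_apply]
    rw [actF_apply_gt A n _ v (n+1) (by omega),
      Finsupp.mapDomain_apply (f := (· + 1)) (add_left_injective 1) _ n, ih, zero_add]

end Statement16Aux

section Statement16Aux2

variable {g : Type} [LieRing g] [LieAlgebra ℂ g]
variable {gh : Type} [LieRing gh] [LieAlgebra ℂ gh]
variable {gt : Type} [LieRing gt] [LieAlgebra ℂ gt]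
variable {M : Type} [AddCommGroup M] [Module ℂ M] [LieRingModule gh M]
variable {M' : Type} [AddCommGroup M'] [Module ℂ M'] [LieRingModule gh M']

lemma mapRange_actF (A : AffineAlg g gh) (f : M →ₗ[ℂ] M')
    (hf : ∀ (z : gh) (v : M), f ⁅z, v⁆ = ⁅z, f v⁆) :
    ∀ (n : ℕ) (u : (ℤ →₀ g) × ℂ) (v : M),
      Finsupp.mapRange ⇑f (map_zero f) (actF A n u v) = actF A n u (f v) := by
  intro n
  induction n with
  | zero =>
    intro u v
    simp only [actF, Finsupp.mapRange_single]
    rw [hf]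
  | succ n ih =>
    intro u v
    simp only [actF]
    rw [Finsupp.mapRange_add (map_add f), ih, ← Finsupp.mapDomain_mapRange _ _ _ _ (map_add f), ih]

variable {Vd : Type} [AddCommGroup Vd] [Module ℂ Vd]
  [LieRingModule gt Vd] [LieModule ℂ gt Vd]
variable {Vd' : Type} [AddCommGroup Vd'] [Module ℂ Vd']
  [LieRingModule gt Vd'] [LieModule ℂ gt Vd']

/-- Any element of `t̃g` decomposes into a loop-plus-K part and a `d` part. -/
lemma decomp_gt (T : AffineAlgD g gt) (z : gt) :
    z = T.e ((T.e.symm z).1, (T.e.symm z).2.1, 0) + (T.e.symm z).2.2 • T.e (0, 0, 1) := by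
  conv_lhs => rw [← T.e.apply_symm_apply z]
  rw [← map_smul, ← map_add]
  congr 1
  simp [Prod.ext_iff, Prod.smul_def]

/-- Forward direction: an isomorphism `M ≅ M'` induces `M[d] ≅ M'[d]`. -/
lemma ind_equiv_of_equiv {T : AffineAlgD g gt} {A : AffineAlg g gh}
    (hInd : IndModule T A M Vd) (hInd' : IndModule T A M' Vd')
    (E : M ≃ₗ⁅ℂ,gh⁆ M') : Nonempty (Vd ≃ₗ⁅ℂ,gt⁆ Vd') := by
  classical
  set lin : M →ₗ[ℂ] M' := E.toLinearEquiv.toLinearMap with hlin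
  have hlie : ∀ (z : gh) (v : M), lin ⁅z, v⁆ = ⁅z, lin v⁆ := fun z v => E.map_lie z v
  set mR : (ℕ →₀ M) ≃ₗ[ℂ] (ℕ →₀ M') :=
    Finsupp.mapRange.linearEquiv E.toLinearEquiv with hmR
  set F : Vd ≃ₗ[ℂ] Vd' := hInd.φ.symm.trans (mR.trans hInd'.φ) with hFdef
  have hmRapp : ∀ w : ℕ →₀ M, mR w = Finsupp.mapRange ⇑lin (map_zero lin) w := by
    intro w
    rfl
  have hFphi : ∀ w : ℕ →₀ M, F (hInd.φ w) = hInd'.φ (mR w) := by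
    intro w
    simp [hFdef, LinearEquiv.trans_apply]
  have haveA : ∀ y : Vd, F ⁅T.e (0, 0, 1), y⁆ = ⁅T.e (0, 0, 1), F y⁆ := by
    intro y
    conv_lhs => rw [← hInd.φ.apply_symm_apply y]
    conv_rhs => rw [← hInd.φ.apply_symm_apply y]
    set w := hInd.φ.symm y
    rw [d_act hInd, hFphi, hFphi, d_act hInd', hmRapp, hmRapp,
      ← Finsupp.mapDomain_mapRange _ _ _ _ (map_add lin)]
  have haveB : ∀ (u : (ℤ →₀ g) × ℂ) (y : Vd),
      F ⁅T.e (u.1, u.2, 0), y⁆ = ⁅T.e (u.1, u.2, 0), F y⁆ := by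
    intro u y
    conv_lhs => rw [← hInd.φ.apply_symm_apply y]
    conv_rhs => rw [← hInd.φ.apply_symm_apply y]
    have key : ∀ w : ℕ →₀ M,
        F ⁅T.e (u.1, u.2, 0), hInd.φ w⁆ = ⁅T.e (u.1, u.2, 0), F (hInd.φ w)⁆ := by
      have h := Finsupp.lhom_ext
        (φ := F.toLinearMap.comp
          ((LieModule.toEnd ℂ gt Vd (T.e (u.1, u.2, 0))).comp hInd.φ.toLinearMap))
        (ψ := (LieModule.toEnd ℂ gt Vd' (T.e (u.1, u.2, 0))).comp
          (F.toLinearMap.comp hInd.φ.toLinearMap))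
        (fun m v => by
          simp only [LinearMap.coe_comp, Function.comp_apply, LinearEquiv.coe_coe,
            LieModule.toEnd_apply_apply]
          rw [act_single hInd, hFphi, hFphi, hmRapp, hmRapp, mapRange_actF A lin hlie,
            Finsupp.mapRange_single, act_single hInd'])
      intro w
      exact LinearMap.congr_fun h w
    exact key (hInd.φ.symm y)
  have haveB' : ∀ (w : ℤ →₀ g) (c : ℂ) (y : Vd),
      F ⁅T.e (w, c, 0), y⁆ = ⁅T.e (w, c, 0), F y⁆ := fun w c y => haveB (w, c) y
  refine ⟨{ toLieModuleHom := { toLinearMap := F.toLinearMap, map_lie' := ?_ },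
            invFun := F.symm, left_inv := F.left_inv, right_inv := F.right_inv }⟩
  intro z y
  show F ⁅z, y⁆ = ⁅z, F y⁆
  rw [decomp_gt T z, add_lie, smul_lie, map_add, map_smul, haveA, haveB', add_lie, smul_lie]

end Statement16Aux2

section Statement16Aux3

variable {g : Type} [LieRing g] [LieAlgebra ℂ g]
variable {gh : Type} [LieRing gh] [LieAlgebra ℂ gh]
variable {gt : Type} [LieRing gt] [LieAlgebra ℂ gt]
variable {M : Type} [AddCommGroup M] [Module ℂ M] [LieRingModule gh M] [LieModule ℂ gh M]
variable {M' : Type} [AddCommGroup M'] [Module ℂ M'] [LieRingModule gh M'] [LieModule ℂ gh M']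
variable {Vd : Type} [AddCommGroup Vd] [Module ℂ Vd]
  [LieRingModule gt Vd] [LieModule ℂ gt Vd]
variable {Vd' : Type} [AddCommGroup Vd'] [Module ℂ Vd']
  [LieRingModule gt Vd'] [LieModule ℂ gt Vd']

/-- Coefficient computation: brackets preserve the "support below `n`" condition, and act
on the top coefficient through `A`. -/
lemma coef_lemma {T : AffineAlgD g gt} {A : AffineAlg g gh}
    (hInd' : IndModule T A M' Vd') (u : (ℤ →₀ g) × ℂ) (x : ℕ →₀ M') (n : ℕ)
    (hx : ∀ m, n < m → x m = 0) :
    (∀ m, n < m → (hInd'.φ.symm ⁅T.e (u.1, u.2, 0), hInd'.φ x⁆) m = 0) ∧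
      (hInd'.φ.symm ⁅T.e (u.1, u.2, 0), hInd'.φ x⁆) n = ⁅A.e u, x n⁆ := by
  classical
  set L : (ℕ →₀ M') →ₗ[ℂ] (ℕ →₀ M') :=
    hInd'.φ.symm.toLinearMap.comp
      ((LieModule.toEnd ℂ gt Vd' (T.e (u.1, u.2, 0))).comp hInd'.φ.toLinearMap) with hL
  have hLapp : ∀ y : ℕ →₀ M',
      hInd'.φ.symm ⁅T.e (u.1, u.2, 0), hInd'.φ y⁆ = L y := fun y => rfl
  have hLsingle : ∀ (m : ℕ) (v : M'), L (Finsupp.single m v) = actF A m u v := by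
    intro m v
    rw [← hLapp, act_single hInd', LinearEquiv.symm_apply_apply]
  have hsum : L x = x.sum fun k v => actF A k u v := by
    conv_lhs => rw [← Finsupp.sum_single x]
    rw [map_finsuppSum]
    exact Finset.sum_congr rfl fun k hk => hLsingle k (x k)
  have hsupp : ∀ k ∈ x.support, k ≤ n := by
    intro k hk
    by_contra hkn
    exact (Finsupp.mem_support_iff.1 hk) (hx k (by omega))
  constructor
  · intro m hm
    rw [hLapp, hsum, Finsupp.sum_apply]
    refine Finset.sum_eq_zero fun k hk => ?_
    exact actF_apply_gt A k u (x k) m (by have := hsupp k hk; omega)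
  · rw [hLapp, hsum, Finsupp.sum_apply, Finsupp.sum]
    rw [Finset.sum_eq_single n
      (fun k hk hkn => actF_apply_gt A k u (x k) n (by have := hsupp k hk; omega))
      (fun hn => by
        rw [Finsupp.notMem_support_iff.1 hn, actF_apply_self, lie_zero,
          ← Finsupp.notMem_support_iff.1 hn])]
    rw [actF_apply_self]

/-- Reverse direction: an isomorphism `M[d] ≅ M'[d]` induces `M ≅ M'`. -/
lemma equiv_of_ind_equiv {T : AffineAlgD g gt} {A : AffineAlg g gh}
    (hM : IsSimpleOrder (LieSubmodule ℂ gh M)) (hM' : IsSimpleOrder (LieSubmodule ℂ gh M'))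
    (hInd : IndModule T A M Vd) (hInd' : IndModule T A M' Vd')
    (G : Vd ≃ₗ⁅ℂ,gt⁆ Vd') : Nonempty (M ≃ₗ⁅ℂ,gh⁆ M') := by
  classical
  set W : M →ₗ[ℂ] (ℕ →₀ M') :=
    hInd'.φ.symm.toLinearMap.comp
      ((G.toLinearEquiv.toLinearMap.comp hInd.φ.toLinearMap).comp (Finsupp.lsingle 0))
    with hWdef
  have hWapp : ∀ v : M, W v = hInd'.φ.symm (G.toLinearEquiv (hInd.φ (Finsupp.single 0 v))) :=
    fun v => rfl
  have hGlie : ∀ (x : gt) (y : Vd), G.toLinearEquiv ⁅x, y⁆ = ⁅x, G.toLinearEquiv y⁆ :=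
    fun x y => G.toLieModuleHom.map_lie x y
  have hWlie : ∀ (z : gh) (v : M),
      W ⁅z, v⁆ = hInd'.φ.symm ⁅T.e ((A.e.symm z).1, (A.e.symm z).2, 0), hInd'.φ (W v)⁆ := by
    intro z v
    have h1 : ⁅z, v⁆ = ⁅A.e (A.e.symm z), v⁆ := by rw [A.e.apply_symm_apply]
    rw [hWapp, h1, ← hInd.rest (A.e.symm z) v, hGlie, hWapp,
      hInd'.φ.apply_symm_apply]
  -- a nonzero vector of M
  have hv0 : ∃ v : M, v ≠ 0 := by
    by_contra h
    push_neg at h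
    exact (bot_ne_top : (⊥ : LieSubmodule ℂ gh M) ≠ ⊤)
      (by ext v; simp [h v, LieSubmodule.mem_bot])
  obtain ⟨v₀, hv₀⟩ := hv0
  have hWv₀ : W v₀ ≠ 0 := by
    intro h
    apply hv₀
    have h1 : G.toLinearEquiv (hInd.φ (Finsupp.single 0 v₀)) = 0 := by
      have h2 := congrArg (fun y => hInd'.φ y) (hWapp v₀ ▸ h)
      simpa using h2
    have h3 : (Finsupp.single 0 v₀ : ℕ →₀ M) = 0 := by
      apply hInd.φ.injective
      apply G.toLinearEquiv.injective
      rw [map_zero, map_zero]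
      exact h1
    simpa using congrArg (fun w : ℕ →₀ M => w 0) h3
  set n : ℕ := (W v₀).support.max' (Finsupp.support_nonempty_iff.2 hWv₀) with hn
  -- the set of v whose image is supported in degrees ≤ n is a Lie submodule
  set N₀ : LieSubmodule ℂ gh M :=
    { carrier := {v | ∀ m, n < m → W v m = 0}
      add_mem' := fun {a b} ha hb m hm => by
        rw [map_add, Finsupp.add_apply, ha m hm, hb m hm, add_zero]
      zero_mem' := fun m hm => by rw [map_zero]; rfl
      smul_mem' := fun c v hv m hm => by
        rw [map_smul, Finsupp.smul_apply, hv m hm, smul_zero]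
      lie_mem := fun {z v} hv m hm => by
        rw [hWlie z v]
        exact (coef_lemma hInd' (A.e.symm z) (W v) n hv).1 m hm } with hN₀
  have hv₀mem : v₀ ∈ N₀ := by
    intro m hm
    by_contra hne
    exact absurd (Finset.le_max' _ m (Finsupp.mem_support_iff.2 hne)) (by omega)
  have hNtop : N₀ = ⊤ := by
    rcases hM.eq_bot_or_eq_top N₀ with h | h
    · exact absurd (h ▸ hv₀mem) (by simpa [LieSubmodule.mem_bot] using hv₀)
    · exact h
  have hbound : ∀ (v : M) (m : ℕ), n < m → W v m = 0 := by
    intro v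
    have : v ∈ N₀ := hNtop ▸ LieSubmodule.mem_top v
    exact this
  -- the top-coefficient map
  set θ : M →ₗ⁅ℂ,gh⁆ M' :=
    { toLinearMap := (Finsupp.lapply n).comp W
      map_lie' := by
        intro z v
        show (W ⁅z, v⁆) n = ⁅z, (W v) n⁆
        rw [hWlie z v, (coef_lemma hInd' (A.e.symm z) (W v) n (hbound v)).2,
          A.e.apply_symm_apply] } with hθ
  have hθv₀ : θ v₀ ≠ 0 := by
    show (W v₀) n ≠ 0
    exact Finsupp.mem_support_iff.1 (Finset.max'_mem _ _)
  have hker : θ.ker = ⊥ := by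
    rcases hM.eq_bot_or_eq_top θ.ker with h | h
    · exact h
    · exact absurd (LieModuleHom.mem_ker.1 (h ▸ LieSubmodule.mem_top v₀)) hθv₀
  have hrange : θ.range = ⊤ := by
    rcases hM'.eq_bot_or_eq_top θ.range with h | h
    · exfalso
      apply hθv₀
      have : θ v₀ ∈ θ.range := ⟨v₀, rfl⟩
      rw [h] at this
      simpa [LieSubmodule.mem_bot] using this
    · exact h
  have hbij : Function.Bijective θ :=
    ⟨(LieModuleHom.ker_eq_bot θ).1 hker, (LieModuleHom.range_eq_top θ).1 hrange⟩
  set Eq := LinearEquiv.ofBijective θ.toLinearMap hbij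
  exact ⟨{ toLieModuleHom := θ, invFun := Eq.symm, left_inv := Eq.left_inv,
           right_inv := Eq.right_inv }⟩

end Statement16Aux3


/-- for irreducible `ĝ`-modules `M, M'`, the induced `t̃g`-modules
satisfy `M[d] ≅ M'[d]` iff `M ≅ M'`. -/
theorem statement16 (g : Type) [LieRing g] [LieAlgebra ℂ g] [FiniteDimensional ℂ g]
    [LieAlgebra.IsSimple ℂ g]
    (gh : Type) [LieRing gh] [LieAlgebra ℂ gh] (A : AffineAlg g gh)
    (gt : Type) [LieRing gt] [LieAlgebra ℂ gt] (T : AffineAlgD g gt)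
    (M : Type) [AddCommGroup M] [Module ℂ M] [LieRingModule gh M] [LieModule ℂ gh M]
    (M' : Type) [AddCommGroup M'] [Module ℂ M'] [LieRingModule gh M'] [LieModule ℂ gh M']
    (hM : IsSimpleOrder (LieSubmodule ℂ gh M))
    (hM' : IsSimpleOrder (LieSubmodule ℂ gh M'))
    (Vd : Type) [AddCommGroup Vd] [Module ℂ Vd] [LieRingModule gt Vd] [LieModule ℂ gt Vd]
    (Vd' : Type) [AddCommGroup Vd'] [Module ℂ Vd'] [LieRingModule gt Vd'] [LieModule ℂ gt Vd']
    (hInd : IndModule T A M Vd) (hInd' : IndModule T A M' Vd') :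
    Nonempty (Vd ≃ₗ⁅ℂ,gt⁆ Vd') ↔ Nonempty (M ≃ₗ⁅ℂ,gh⁆ M') := by
  constructor
  · rintro ⟨G⟩
    exact equiv_of_ind_equiv hM hM' hInd hInd' G
  · rintro ⟨E⟩
    exact ind_equiv_of_equiv hInd hInd' E

end AffinePaper
end
end
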